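/- In the finite approximation MDP of the belief MDP with cut-offs, the reachability value is an under-approximation: for every belief b explored in the finite MDP M̄^B (with frontier beliefs b redirected to sinks b_⊤ with probability V̲(b) and b_⊥ with probability 1−V̲(b), where V̲(b) under-approximates the optimal belief value), the maximal probability of reaching T^B ∪ {b_⊤} in M̄^B is at most the maximal probability of reaching T^B from b in the full belief MDP. -/

import Mathlib

open scoped ENNReal Classical

/-- `n`-step maximal reachability probability of `T` in an MDP. -/
noncomputable def mdpMaxReachN {St A : Type*} (P : St → A → St → ℝ≥0∞) (T : Set St) :
    ℕ → St → ℝ≥0∞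
  | 0, s => if s ∈ T then 1 else 0
  | n + 1, s => if s ∈ T then 1 else ⨆ a, ∑' s', P s a s' * mdpMaxReachN P T n s'

/-- Maximal reachability probability of `T` in an MDP. -/
noncomputable def mdpMaxReach {St A : Type*} (P : St → A → St → ℝ≥0∞) (T : Set St)
    (s : St) : ℝ≥0∞ :=
  ⨆ n, mdpMaxReachN P T n s

/-- The finite approximation MDP with cut-offs: states are `B ⊕ Bool`, where `Sum.inl b`
is a belief, `Sum.inr true` is the target sink `b_⊤` and `Sum.inr false` is `b_⊥`.
Explored beliefs `b ∈ E` keep their transitions; any other belief moves (under every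
action) to `b_⊤` with probability `V̲(b)` and to `b_⊥` with probability `1 − V̲(b)`;
the sinks are absorbing. -/
noncomputable def approxP {B A : Type*} (P : B → A → B → ℝ≥0∞) (E : Set B)
    (V : B → ℝ≥0∞) : (B ⊕ Bool) → A → (B ⊕ Bool) → ℝ≥0∞
  | Sum.inl b, a, Sum.inl b' => if b ∈ E then P b a b' else 0
  | Sum.inl b, _, Sum.inr c => if b ∈ E then 0 else (if c then V b else 1 - V b)
  | Sum.inr c, _, Sum.inr c' => if c' = c then 1 else 0
  | Sum.inr _, _, Sum.inl _ => 0

/-- tsum over a sum type splits. -/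
lemma tsum_sum_type_split {B C : Type*} (f : B ⊕ C → ℝ≥0∞) :
    ∑' s, f s = (∑' b, f (Sum.inl b)) + ∑' c, f (Sum.inr c) := by
  have h1 : HasSum (f ∘ ((↑) : Set.range (Sum.inl : B → B ⊕ C) → B ⊕ C))
      (∑' b, f (Sum.inl b)) := by
    rw [← (Equiv.ofInjective (Sum.inl : B → B ⊕ C) Sum.inl_injective).hasSum_iff]
    exact ENNReal.summable.hasSum
  have h2 : HasSum (f ∘ ((↑) : Set.range (Sum.inr : C → B ⊕ C) → B ⊕ C))
      (∑' c, f (Sum.inr c)) := by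
    rw [← (Equiv.ofInjective (Sum.inr : C → B ⊕ C) Sum.inr_injective).hasSum_iff]
    exact ENNReal.summable.hasSum
  exact (h1.add_isCompl Set.isCompl_range_inl_range_inr h2).tsum_eq

lemma mdpMaxReachN_mono {St A : Type*} (P : St → A → St → ℝ≥0∞) (T : Set St) :
    ∀ n s, mdpMaxReachN P T n s ≤ mdpMaxReachN P T (n + 1) s := by
  intro n
  induction n with
  | zero =>
    intro s
    simp only [mdpMaxReachN]
    split <;> simp
  | succ n ih =>
    intro s
    simp only [mdpMaxReachN]
    split
    · exact le_rfl
    · exact iSup_mono fun a => ENNReal.tsum_le_tsum fun s' =>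
        mul_le_mul_right (ih s') _

lemma mdpMaxReachN_mono' {St A : Type*} (P : St → A → St → ℝ≥0∞) (T : Set St) (s : St) :
    Monotone fun n => mdpMaxReachN P T n s :=
  monotone_nat_of_le_succ fun n => mdpMaxReachN_mono P T n s

lemma mdpMaxReachN_le_one {St A : Type*} (P : St → A → St → ℝ≥0∞)
    (hP : ∀ b a, ∑' b', P b a b' = 1) (T : Set St) :
    ∀ n s, mdpMaxReachN P T n s ≤ 1 := by
  intro n
  induction n with
  | zero =>
    intro s; simp only [mdpMaxReachN]; split <;> simp
  | succ n ih =>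
    intro s
    simp only [mdpMaxReachN]
    split
    · exact le_rfl
    · refine iSup_le fun a => ?_
      calc ∑' s', P s a s' * mdpMaxReachN P T n s'
          ≤ ∑' s', P s a s' * 1 :=
            ENNReal.tsum_le_tsum fun s' => mul_le_mul_right (ih s') _
        _ = 1 := by simpa using hP s a

lemma mdpMaxReachN_le_mdpMaxReach {St A : Type*} (P : St → A → St → ℝ≥0∞) (T : Set St)
    (n : ℕ) (s : St) : mdpMaxReachN P T n s ≤ mdpMaxReach P T s :=
  le_iSup (fun n => mdpMaxReachN P T n s) n

/-- The optimal value is superharmonic. -/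
lemma step_le_mdpMaxReach {St A : Type*} (P : St → A → St → ℝ≥0∞)
    (hP : ∀ b a, ∑' b', P b a b' = 1) (T : Set St) (s : St) (a : A) :
    ∑' s', P s a s' * mdpMaxReach P T s' ≤ mdpMaxReach P T s := by
  have key : ∑' s', P s a s' * mdpMaxReach P T s'
      = ⨆ n, ∑' s', P s a s' * mdpMaxReachN P T n s' := by
    simp only [mdpMaxReach, ENNReal.mul_iSup]
    rw [ENNReal.tsum_eq_iSup_sum]
    have : ∀ n, ∑' s', P s a s' * mdpMaxReachN P T n s'
        = ⨆ t : Finset St, ∑ s' ∈ t, P s a s' * mdpMaxReachN P T n s' :=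
      fun n => ENNReal.tsum_eq_iSup_sum
    simp only [this]
    rw [iSup_comm]
    congr 1
    ext t
    exact ENNReal.finsetSum_iSup_of_monotone fun s' m k hmk =>
      mul_le_mul_right (mdpMaxReachN_mono' P T s' hmk) _
  rw [key]
  refine iSup_le fun n => ?_
  refine le_trans ?_ (mdpMaxReachN_le_mdpMaxReach P T (n + 1) s)
  simp only [mdpMaxReachN]
  split
  · calc ∑' s', P s a s' * mdpMaxReachN P T n s'
        ≤ ∑' s', P s a s' * 1 :=
          ENNReal.tsum_le_tsum fun s' => mul_le_mul_right (mdpMaxReachN_le_one P hP T n s') _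
      _ = 1 := by simpa using hP s a
  · exact le_iSup (fun a => ∑' s', P s a s' * mdpMaxReachN P T n s') a

/-- in the finite approximation MDP of the belief MDP with cut-offs, the
reachability value under-approximates the true value: if each cut-off value satisfies
`V̲(b) ≤ P_max^{M^B}(b ⊨ ◇T^B)`, then for every explored belief `b ∈ E`, the maximal
probability of reaching `T^B ∪ {b_⊤}` in the approximation is at most the maximal
probability of reaching `T^B` from `b` in the full belief MDP. -/
theorem approx_mdp_underapproximates
    {B A : Type*}
    (P : B → A → B → ℝ≥0∞) (hP : ∀ b a, ∑' b', P b a b' = 1)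
    (TB : Set B) (E : Set B) (V : B → ℝ≥0∞)
    (hV : ∀ b, V b ≤ mdpMaxReach P TB b)
    (b : B) (hb : b ∈ E) :
    mdpMaxReach (approxP P E V)
        ({p : B ⊕ Bool | ∃ b' ∈ TB, p = Sum.inl b'} ∪ {Sum.inr true})
        (Sum.inl b)
      ≤ mdpMaxReach P TB b := by
  set T' : Set (B ⊕ Bool) :=
    ({p : B ⊕ Bool | ∃ b' ∈ TB, p = Sum.inl b'} ∪ {Sum.inr true}) with hT'
  set Q := approxP (A := A) P E V with hQ
  -- bounding function
  set g : B ⊕ Bool → ℝ≥0∞ :=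
    fun s => match s with
      | Sum.inl b => mdpMaxReach P TB b
      | Sum.inr true => 1
      | Sum.inr false => 0 with hg
  have hinl : ∀ b' : B, b' ∈ TB → (1 : ℝ≥0∞) ≤ mdpMaxReach P TB b' := by
    intro b' hb'
    refine le_trans ?_ (mdpMaxReachN_le_mdpMaxReach P TB 0 b')
    simp [mdpMaxReachN, hb']
  have hmemT' : ∀ b' : B, Sum.inl b' ∈ T' ↔ b' ∈ TB := by
    intro b'
    simp only [hT', Set.mem_union, Set.mem_setOf_eq, Set.mem_singleton_iff]
    constructor
    · rintro (⟨c, hc, hceq⟩ | h)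
      · cases hceq; exact hc
      · exact absurd h (by simp)
    · intro h; exact Or.inl ⟨b', h, rfl⟩
  have htrue : Sum.inr true ∈ T' := by simp [hT']
  have hfalse : Sum.inr false ∉ T' := by simp [hT']
  have key : ∀ n s, mdpMaxReachN Q T' n s ≤ g s := by
    intro n
    induction n with
    | zero =>
      intro s
      simp only [mdpMaxReachN]
      split
      · rename_i hs
        match s with
        | Sum.inl b' => exact hinl b' ((hmemT' b').mp hs)
        | Sum.inr true => exact le_rfl
        | Sum.inr false => exact absurd hs hfalse
      · exact zero_le
    | succ n ih =>
      intro s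
      simp only [mdpMaxReachN]
      split
      · rename_i hs
        match s with
        | Sum.inl b' => exact hinl b' ((hmemT' b').mp hs)
        | Sum.inr true => exact le_rfl
        | Sum.inr false => exact absurd hs hfalse
      · rename_i hs
        refine iSup_le fun a => ?_
        match s with
        | Sum.inl b' =>
          by_cases hbE : b' ∈ E
          · -- explored belief: transitions as in P
            calc ∑' s', Q (Sum.inl b') a s' * mdpMaxReachN Q T' n s'
                ≤ ∑' s', Q (Sum.inl b') a s' * g s' :=
                  ENNReal.tsum_le_tsum fun s' => mul_le_mul_right (ih s') _
              _ = (∑' c, Q (Sum.inl b') a (Sum.inl c) * g (Sum.inl c))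
                    + ∑' c : Bool, Q (Sum.inl b') a (Sum.inr c) * g (Sum.inr c) :=
                  tsum_sum_type_split _
              _ = ∑' c, P b' a c * mdpMaxReach P TB c := by
                  simp [hQ, approxP, hbE, hg]
              _ ≤ mdpMaxReach P TB b' := step_le_mdpMaxReach P hP TB b' a
          · -- frontier belief: jumps to sinks
            calc ∑' s', Q (Sum.inl b') a s' * mdpMaxReachN Q T' n s'
                ≤ ∑' s', Q (Sum.inl b') a s' * g s' :=
                  ENNReal.tsum_le_tsum fun s' => mul_le_mul_right (ih s') _
              _ = (∑' c, Q (Sum.inl b') a (Sum.inl c) * g (Sum.inl c))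
                    + ∑' c : Bool, Q (Sum.inl b') a (Sum.inr c) * g (Sum.inr c) :=
                  tsum_sum_type_split _
              _ = V b' := by
                  simp [hQ, approxP, hbE, hg, tsum_bool]
              _ ≤ mdpMaxReach P TB b' := hV b'
        | Sum.inr true => exact absurd htrue hs
        | Sum.inr false =>
          calc ∑' s', Q (Sum.inr false) a s' * mdpMaxReachN Q T' n s'
              ≤ ∑' s', Q (Sum.inr false) a s' * g s' :=
                ENNReal.tsum_le_tsum fun s' => mul_le_mul_right (ih s') _
            _ = (∑' c : B, Q (Sum.inr false) a (Sum.inl c) * g (Sum.inl c))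
                  + ∑' c : Bool, Q (Sum.inr false) a (Sum.inr c) * g (Sum.inr c) :=
                tsum_sum_type_split _
            _ = 0 := by simp [hQ, approxP, hg, tsum_bool]
  exact iSup_le fun n => key n (Sum.inl b)
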